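/- (Lipschitz continuity of the TD limiting point, Proposition 4.1 in hypothesis form.) Let Θ be a normed vector space (parameter space) and for each θ ∈ Θ let ν_θ be a probability measure on a measurable space Ω. Let φ, ψ : Ω → ℝ^d be measurable with ‖φ(x)‖ ≤ 1 and ‖ψ(x)‖ ≤ 1 for all x, and r : Ω → ℝ measurable with |r(x)| ≤ U_r for all x. Define J(θ) := ∫ r dν_θ, A(θ) := ∫ φ(ψ − φ)ᵀ dν_θ, and b(θ) := ∫ (r(x) − J(θ)) φ(x) dν_θ(x). Assume (i) d_TV(ν_{θ₁}, ν_{θ₂}) ≤ K ‖θ₁ − θ₂‖ for all θ₁, θ₂ and some K > 0, and (ii) each A(θ) is invertible with ‖A(θ)⁻¹‖₂ ≤ 1/λ for some λ > 0. Then the map ω*(θ) := −A(θ)⁻¹ b(θ) is Lipschitz: for all θ₁, θ₂, ‖ω*(θ₁) − ω*(θ₂)‖ ≤ (8 λ⁻² + 6 λ⁻¹) U_r K ‖θ₁ − θ₂‖. -/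

import Mathlib

open MeasureTheory Filter
open scoped RealInnerProductSpace
set_option maxHeartbeats 1000000

/-- Total variation distance between two measures:
`d_TV(μ, ν) = sup_{A measurable} |μ(A) − ν(A)|`. -/
noncomputable def tvDist {Ω : Type*} [MeasurableSpace Ω] (μ ν : Measure Ω) : ℝ :=
  ⨆ A : {A : Set Ω // MeasurableSet A}, |(μ A.1).toReal - (ν A.1).toReal|

lemma tvDist_nonneg {Ω : Type*} [MeasurableSpace Ω] (μ ν : Measure Ω) : 0 ≤ tvDist μ ν :=
  Real.iSup_nonneg (fun _ => abs_nonneg _)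

lemma le_tvDist {Ω : Type*} [MeasurableSpace Ω] (μ ν : Measure Ω)
    [IsProbabilityMeasure μ] [IsProbabilityMeasure ν] {A : Set Ω} (hA : MeasurableSet A) :
    |(μ A).toReal - (ν A).toReal| ≤ tvDist μ ν := by
  refine le_ciSup (f := fun A : {A : Set Ω // MeasurableSet A} => |(μ A.1).toReal - (ν A.1).toReal|)
    ?_ ⟨A, hA⟩
  refine ⟨1, ?_⟩
  rintro x ⟨B, rfl⟩
  have h1 : (μ B.1).toReal ≤ 1 := by
    simpa using ENNReal.toReal_mono (by simp) (prob_le_one (μ := μ) (s := B.1))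
  have h2 : (ν B.1).toReal ≤ 1 := by
    simpa using ENNReal.toReal_mono (by simp) (prob_le_one (μ := ν) (s := B.1))
  have h3 : (0:ℝ) ≤ (μ B.1).toReal := ENNReal.toReal_nonneg
  have h4 : (0:ℝ) ≤ (ν B.1).toReal := ENNReal.toReal_nonneg
  rw [abs_le]; constructor <;> linarith

lemma abs_integral_sub_le_tv {Ω : Type*} [MeasurableSpace Ω] (μ ν : Measure Ω)
    [IsProbabilityMeasure μ] [IsProbabilityMeasure ν] (g : Ω → ℝ) (hg : Measurable g)
    (M : ℝ) (hgb : ∀ x, |g x| ≤ M) :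
    |∫ x, g x ∂μ - ∫ x, g x ∂ν| ≤ 2 * M * tvDist μ ν := by
  have hM : 0 ≤ M := by
    by_cases hΩ : Nonempty Ω
    · obtain ⟨x⟩ := hΩ; exact (abs_nonneg _).trans (hgb x)
    · exfalso
      have : μ Set.univ = 1 := measure_univ
      rw [Set.univ_eq_empty_iff.mpr (not_nonempty_iff.mp hΩ)] at this
      simp at this
  have hgint : ∀ (κ : Measure Ω) [IsProbabilityMeasure κ], Integrable g κ := by
    intro κ _
    exact (integrable_const M).mono' hg.aestronglyMeasurable
      (Eventually.of_forall (fun x => by rw [Real.norm_eq_abs]; exact hgb x))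
  have h : Ω → ℝ := fun x => g x + M
  have hhm : Measurable (fun x => g x + M) := hg.add_const M
  have hnn : ∀ x, 0 ≤ g x + M := fun x => by have := abs_le.mp (hgb x); linarith [this.1]
  have hbd : ∀ x, g x + M ≤ 2 * M := fun x => by have := abs_le.mp (hgb x); linarith [this.2]
  have hint : ∀ (κ : Measure Ω) [IsProbabilityMeasure κ], Integrable (fun x => g x + M) κ :=
    fun κ _ => (hgint κ).add (integrable_const M)
  have key : ∀ (κ : Measure Ω) [IsProbabilityMeasure κ],
      ∫ x, g x ∂κ + M = ∫ t in Set.Ioc 0 (2*M), (κ {a | t ≤ g a + M}).toReal := by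
    intro κ _
    have := (hint κ).integral_eq_integral_Ioc_meas_le (M := 2*M)
      (Eventually.of_forall hnn) (Eventually.of_forall hbd)
    rw [integral_add (hgint κ) (integrable_const M)] at this
    simpa [Measure.real] using this
  have layer_int : ∀ (κ : Measure Ω) [IsProbabilityMeasure κ],
      IntegrableOn (fun t => (κ {a | t ≤ g a + M}).toReal) (Set.Ioc 0 (2*M)) := by
    intro κ _
    have hmeas : Measurable fun t => (κ {a | t ≤ g a + M}).toReal := by
      apply Measurable.ennreal_toReal
      exact Antitone.measurable (fun s t hst => measure_mono (fun a ha => hst.trans ha))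
    refine Integrable.mono' (g := fun _ : ℝ => (1:ℝ))
      (integrableOn_const (C := (1:ℝ)) measure_Ioc_lt_top.ne)
      hmeas.aestronglyMeasurable ?_
    refine Eventually.of_forall (fun t => ?_)
    simp only [Real.norm_eq_abs, ENNReal.abs_toReal]
    calc (κ {a | t ≤ g a + M}).toReal ≤ (κ Set.univ).toReal := by
          apply ENNReal.toReal_mono (by simp); exact measure_mono (Set.subset_univ _)
      _ = 1 := by simp
  have hsub : ∫ x, g x ∂μ - ∫ x, g x ∂ν
      = ∫ t in Set.Ioc 0 (2*M), ((μ {a | t ≤ g a + M}).toReal - (ν {a | t ≤ g a + M}).toReal) := by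
    rw [integral_sub (layer_int μ) (layer_int ν)]
    have := key μ; have := key ν
    linarith [key μ, key ν]
  rw [hsub]
  calc |∫ t in Set.Ioc 0 (2*M), ((μ {a | t ≤ g a + M}).toReal - (ν {a | t ≤ g a + M}).toReal)|
      ≤ ∫ t in Set.Ioc 0 (2*M), |(μ {a | t ≤ g a + M}).toReal - (ν {a | t ≤ g a + M}).toReal| :=
        by simpa [Real.norm_eq_abs] using
          norm_integral_le_integral_norm
            (μ := volume.restrict (Set.Ioc 0 (2*M)))
            (fun t => (μ {a | t ≤ g a + M}).toReal - (ν {a | t ≤ g a + M}).toReal)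
    _ ≤ ∫ _t in Set.Ioc 0 (2*M), tvDist μ ν := by
        refine setIntegral_mono_on ((layer_int μ).sub (layer_int ν)).abs
          (integrableOn_const measure_Ioc_lt_top.ne) measurableSet_Ioc ?_
        intro t _
        exact le_tvDist μ ν (hhm measurableSet_Ici)
    _ = 2 * M * tvDist μ ν := by
        rw [setIntegral_const]
        simp [Real.volume_Ioc, ENNReal.toReal_ofReal (by linarith : (0:ℝ) ≤ 2*M), hM]

open scoped RealInnerProductSpace in
lemma norm_integral_sub_le_tv {Ω : Type*} [MeasurableSpace Ω] (μ ν : Measure Ω)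
    [IsProbabilityMeasure μ] [IsProbabilityMeasure ν] {d : ℕ}
    (f : Ω → EuclideanSpace ℝ (Fin d)) (hf : Measurable f)
    (M : ℝ) (hM : 0 ≤ M) (hfb : ∀ x, ‖f x‖ ≤ M) :
    ‖∫ x, f x ∂μ - ∫ x, f x ∂ν‖ ≤ 2 * M * tvDist μ ν := by
  have hfint : ∀ (κ : Measure Ω) [IsProbabilityMeasure κ], Integrable f κ := by
    intro κ _
    exact (integrable_const M).mono' hf.aestronglyMeasurable (Eventually.of_forall hfb)
  set v := ∫ x, f x ∂μ - ∫ x, f x ∂ν with hv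
  have hg : Measurable fun x => ⟪v, f x⟫ := measurable_const.inner hf
  have hgb : ∀ x, |⟪v, f x⟫| ≤ ‖v‖ * M := fun x =>
    (abs_real_inner_le_norm v (f x)).trans
      (mul_le_mul_of_nonneg_left (hfb x) (norm_nonneg v))
  have key := abs_integral_sub_le_tv μ ν (fun x => ⟪v, f x⟫) hg (‖v‖ * M) hgb
  rw [integral_inner (hfint μ) v, integral_inner (hfint ν) v,
    ← inner_sub_right, ← hv, real_inner_self_eq_norm_mul_norm] at key
  rcases eq_or_ne v 0 with h0 | h0
  · rw [h0]
    simpa using mul_nonneg (by positivity : (0:ℝ) ≤ 2*M) (tvDist_nonneg μ ν)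
  · have hvpos : 0 < ‖v‖ := norm_pos_iff.mpr h0
    have : ‖v‖ * ‖v‖ ≤ (2 * M * tvDist μ ν) * ‖v‖ := by
      calc ‖v‖ * ‖v‖ ≤ |‖v‖ * ‖v‖| := le_abs_self _
        _ ≤ 2 * (‖v‖ * M) * tvDist μ ν := key
        _ = (2 * M * tvDist μ ν) * ‖v‖ := by ring
    exact le_of_mul_le_mul_right this hvpos


/-- Lipschitz continuity of the TD(0) limiting point `ω*(θ) = −A(θ)⁻¹ b(θ)`:
if the family of distributions `ν_θ` is `K`-Lipschitz in total variation, the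
feature maps are bounded by `1`, the reward by `U_r`, and each `A(θ)` is
invertible with `‖A(θ)⁻¹‖ ≤ 1/λ`, then
`‖ω*(θ₁) − ω*(θ₂)‖ ≤ (8 λ⁻² + 6 λ⁻¹) U_r K ‖θ₁ − θ₂‖`. -/
theorem td_fixed_point_lipschitz {Θ Ω : Type*}
    [NormedAddCommGroup Θ] [NormedSpace ℝ Θ] [MeasurableSpace Ω] {d : ℕ}
    (ν : Θ → Measure Ω) [∀ θ, IsProbabilityMeasure (ν θ)]
    (φ ψ : Ω → EuclideanSpace ℝ (Fin d)) (hφm : Measurable φ) (hψm : Measurable ψ)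
    (hφ : ∀ x, ‖φ x‖ ≤ 1) (hψ : ∀ x, ‖ψ x‖ ≤ 1)
    (r : Ω → ℝ) (hrm : Measurable r) (Ur : ℝ) (hr : ∀ x, |r x| ≤ Ur)
    (K lam : ℝ) (hK : 0 < K) (hlam : 0 < lam)
    (hTV : ∀ θ₁ θ₂ : Θ, tvDist (ν θ₁) (ν θ₂) ≤ K * ‖θ₁ - θ₂‖)
    (J : Θ → ℝ) (hJ : ∀ θ, J θ = ∫ x, r x ∂(ν θ))
    (A : Θ → (EuclideanSpace ℝ (Fin d) →L[ℝ] EuclideanSpace ℝ (Fin d)))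
    (hA : ∀ θ, A θ = ∫ x, (innerSL ℝ (ψ x - φ x)).smulRight (φ x) ∂(ν θ))
    (b : Θ → EuclideanSpace ℝ (Fin d))
    (hb : ∀ θ, b θ = ∫ x, (r x - J θ) • φ x ∂(ν θ))
    (Ainv : Θ → (EuclideanSpace ℝ (Fin d) →L[ℝ] EuclideanSpace ℝ (Fin d)))
    (hinv₁ : ∀ θ, (A θ).comp (Ainv θ) = ContinuousLinearMap.id ℝ (EuclideanSpace ℝ (Fin d)))
    (hinv₂ : ∀ θ, (Ainv θ).comp (A θ) = ContinuousLinearMap.id ℝ (EuclideanSpace ℝ (Fin d)))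
    (hAinv : ∀ θ, ‖Ainv θ‖ ≤ 1 / lam)
    (ωstar : Θ → EuclideanSpace ℝ (Fin d)) (hω : ∀ θ, ωstar θ = -(Ainv θ (b θ))) :
    ∀ θ₁ θ₂ : Θ, ‖ωstar θ₁ - ωstar θ₂‖ ≤
      (8 * lam⁻¹ ^ 2 + 6 * lam⁻¹) * Ur * K * ‖θ₁ - θ₂‖ := by
  intro θ₁ θ₂
  have hΩ : Nonempty Ω := by
    by_contra hc
    have h1 : (ν θ₁) Set.univ = 1 := measure_univ
    rw [Set.univ_eq_empty_iff.mpr (not_nonempty_iff.mp hc)] at h1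
    simp at h1
  have hUr : 0 ≤ Ur := by obtain ⟨x⟩ := hΩ; exact (abs_nonneg _).trans (hr x)
  set T := tvDist (ν θ₁) (ν θ₂) with hT
  have hT0 : 0 ≤ T := tvDist_nonneg _ _
  have hTD : T ≤ K * ‖θ₁ - θ₂‖ := hTV θ₁ θ₂
  -- J bounds
  have hJabs : ∀ θ, |J θ| ≤ Ur := by
    intro θ
    rw [hJ θ, ← Real.norm_eq_abs]
    calc ‖∫ x, r x ∂ν θ‖ ≤ Ur * ((ν θ) Set.univ).toReal :=
          norm_integral_le_of_norm_le_const
            (Eventually.of_forall (fun x => by rw [Real.norm_eq_abs]; exact hr x))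
      _ = Ur := by simp
  have hJd : |J θ₁ - J θ₂| ≤ 2 * Ur * T := by
    rw [hJ θ₁, hJ θ₂]
    exact abs_integral_sub_le_tv (ν θ₁) (ν θ₂) r hrm Ur hr
  -- b bounds
  have hbmeas : ∀ c : ℝ, Measurable fun x => (r x - c) • φ x :=
    fun c => (hrm.sub measurable_const).smul hφm
  have hbptw : ∀ (c : ℝ), |c| ≤ Ur → ∀ x, ‖(r x - c) • φ x‖ ≤ 2 * Ur := by
    intro c hc x
    rw [norm_smul]
    have h1 : ‖r x - c‖ ≤ 2 * Ur := by
      rw [Real.norm_eq_abs]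
      calc |r x - c| ≤ |r x| + |c| := abs_sub _ _
        _ ≤ 2 * Ur := by linarith [hr x]
    calc ‖r x - c‖ * ‖φ x‖ ≤ (2 * Ur) * 1 :=
          mul_le_mul h1 (hφ x) (norm_nonneg _) (by linarith)
      _ = 2 * Ur := by ring
  have hbnorm : ‖b θ₂‖ ≤ 2 * Ur := by
    rw [hb θ₂]
    calc ‖∫ x, (r x - J θ₂) • φ x ∂ν θ₂‖ ≤ (2 * Ur) * ((ν θ₂) Set.univ).toReal :=
          norm_integral_le_of_norm_le_const
            (Eventually.of_forall (hbptw (J θ₂) (hJabs θ₂)))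
      _ = 2 * Ur := by simp
  have hbint : ∀ (θ : Θ) (c : ℝ), |c| ≤ Ur → Integrable (fun x => (r x - c) • φ x) (ν θ) :=
    fun θ c hc => (integrable_const (2 * Ur)).mono' (hbmeas c).aestronglyMeasurable
      (Eventually.of_forall (hbptw c hc))
  have hbd : ‖b θ₁ - b θ₂‖ ≤ 6 * Ur * T := by
    have e1 : ‖(∫ x, (r x - J θ₁) • φ x ∂ν θ₁) - ∫ x, (r x - J θ₁) • φ x ∂ν θ₂‖
        ≤ 2 * (2 * Ur) * T :=
      norm_integral_sub_le_tv (ν θ₁) (ν θ₂) _ (hbmeas (J θ₁)) (2 * Ur) (by linarith)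
        (hbptw (J θ₁) (hJabs θ₁))
    have e2 : ‖(∫ x, (r x - J θ₁) • φ x ∂ν θ₂) - ∫ x, (r x - J θ₂) • φ x ∂ν θ₂‖
        ≤ 2 * Ur * T := by
      rw [← integral_sub (hbint θ₂ (J θ₁) (hJabs θ₁)) (hbint θ₂ (J θ₂) (hJabs θ₂))]
      have hc : ∀ x : Ω, (r x - J θ₁) • φ x - (r x - J θ₂) • φ x = (J θ₂ - J θ₁) • φ x := by
        intro x; rw [← sub_smul]; ring_nf
      calc ‖∫ x, ((r x - J θ₁) • φ x - (r x - J θ₂) • φ x) ∂ν θ₂‖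
          = ‖∫ x, (J θ₂ - J θ₁) • φ x ∂ν θ₂‖ := by
            congr 1; exact integral_congr_ae (Eventually.of_forall hc)
        _ ≤ |J θ₂ - J θ₁| * ((ν θ₂) Set.univ).toReal :=
            norm_integral_le_of_norm_le_const (Eventually.of_forall (fun x => by
              rw [norm_smul, Real.norm_eq_abs]
              calc |J θ₂ - J θ₁| * ‖φ x‖ ≤ |J θ₂ - J θ₁| * 1 :=
                    mul_le_mul_of_nonneg_left (hφ x) (abs_nonneg _)
                _ = |J θ₂ - J θ₁| := by ring))
        _ ≤ 2 * Ur * T := by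
            have habs : |J θ₂ - J θ₁| = |J θ₁ - J θ₂| := abs_sub_comm _ _
            simpa [habs] using hJd
    calc ‖b θ₁ - b θ₂‖
        = ‖((∫ x, (r x - J θ₁) • φ x ∂ν θ₁) - ∫ x, (r x - J θ₁) • φ x ∂ν θ₂)
            + ((∫ x, (r x - J θ₁) • φ x ∂ν θ₂) - ∫ x, (r x - J θ₂) • φ x ∂ν θ₂)‖ := by
          rw [hb θ₁, hb θ₂]; congr 1; abel
      _ ≤ 2 * (2 * Ur) * T + 2 * Ur * T := (norm_add_le _ _).trans (add_le_add e1 e2)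
      _ = 6 * Ur * T := by ring
  -- A bounds
  have hAmeas : Measurable fun x => (innerSL ℝ (ψ x - φ x)).smulRight (φ x) := by
    have h1 : Measurable fun x => innerSL ℝ (ψ x - φ x) :=
      (innerSL ℝ).continuous.measurable.comp (hψm.sub hφm)
    have h2 : Measurable fun x => (innerSL ℝ (ψ x - φ x), φ x) := h1.prodMk hφm
    have h3 : Continuous fun p :
        (EuclideanSpace ℝ (Fin d) →L[ℝ] ℝ) × EuclideanSpace ℝ (Fin d) =>
        p.1.smulRight p.2 := isBoundedBilinearMap_smulRight.continuous
    exact h3.measurable.comp h2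
  have hAptw : ∀ x, ‖(innerSL ℝ (ψ x - φ x)).smulRight (φ x)‖ ≤ 2 := by
    intro x
    rw [ContinuousLinearMap.norm_smulRight_apply, innerSL_apply_norm]
    calc ‖ψ x - φ x‖ * ‖φ x‖ ≤ 2 * 1 := by
          refine mul_le_mul ?_ (hφ x) (norm_nonneg _) (by norm_num)
          calc ‖ψ x - φ x‖ ≤ ‖ψ x‖ + ‖φ x‖ := norm_sub_le _ _
            _ ≤ 2 := by linarith [hψ x, hφ x]
      _ = 2 := by ring
  have hAint : ∀ θ, Integrable (fun x => (innerSL ℝ (ψ x - φ x)).smulRight (φ x)) (ν θ) :=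
    fun θ => (integrable_const (2:ℝ)).mono' hAmeas.aestronglyMeasurable
      (Eventually.of_forall hAptw)
  have hAapp : ∀ (θ : Θ) (w : EuclideanSpace ℝ (Fin d)),
      A θ w = ∫ x, ⟪ψ x - φ x, w⟫ • φ x ∂ν θ := by
    intro θ w
    rw [hA θ, ContinuousLinearMap.integral_apply (hAint θ) w]
    simp only [ContinuousLinearMap.smulRight_apply, innerSL_apply_apply]
  have hAd : ∀ w : EuclideanSpace ℝ (Fin d), ‖(A θ₁) w - (A θ₂) w‖ ≤ 4 * T * ‖w‖ := by
    intro w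
    rw [hAapp θ₁ w, hAapp θ₂ w]
    have hm : Measurable fun x => ⟪ψ x - φ x, w⟫ • φ x :=
      ((hψm.sub hφm).inner measurable_const).fun_smul hφm
    have hptw : ∀ x, ‖⟪ψ x - φ x, w⟫ • φ x‖ ≤ 2 * ‖w‖ := by
      intro x
      rw [norm_smul, Real.norm_eq_abs]
      calc |⟪ψ x - φ x, w⟫| * ‖φ x‖ ≤ (‖ψ x - φ x‖ * ‖w‖) * 1 := by
            refine mul_le_mul ((abs_real_inner_le_norm _ _)) (hφ x) (norm_nonneg _) ?_
            positivity
        _ ≤ (2 * ‖w‖) * 1 := by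
            have : ‖ψ x - φ x‖ ≤ 2 := by
              calc ‖ψ x - φ x‖ ≤ ‖ψ x‖ + ‖φ x‖ := norm_sub_le _ _
                _ ≤ 2 := by linarith [hψ x, hφ x]
            nlinarith [norm_nonneg w]
        _ = 2 * ‖w‖ := by ring
    calc ‖(∫ x, ⟪ψ x - φ x, w⟫ • φ x ∂ν θ₁) - ∫ x, ⟪ψ x - φ x, w⟫ • φ x ∂ν θ₂‖
        ≤ 2 * (2 * ‖w‖) * T :=
          norm_integral_sub_le_tv (ν θ₁) (ν θ₂) _ hm (2 * ‖w‖) (by positivity) hptw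
      _ = 4 * T * ‖w‖ := by ring
  -- inverse identities
  have hid₁ : ∀ (θ : Θ) (x : EuclideanSpace ℝ (Fin d)), A θ (Ainv θ x) = x := by
    intro θ x
    have := DFunLike.congr_fun (hinv₁ θ) x
    simpa using this
  have hid₂ : ∀ (θ : Θ) (x : EuclideanSpace ℝ (Fin d)), Ainv θ (A θ x) = x := by
    intro θ x
    have := DFunLike.congr_fun (hinv₂ θ) x
    simpa using this
  -- expansion
  have expand : ωstar θ₁ - ωstar θ₂ = Ainv θ₁ (b θ₂ - b θ₁)
      + Ainv θ₂ (A θ₁ (Ainv θ₁ (b θ₂)) - A θ₂ (Ainv θ₁ (b θ₂))) := by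
    rw [hω θ₁, hω θ₂, map_sub, map_sub, hid₁ θ₁ (b θ₂), hid₂ θ₂ (Ainv θ₁ (b θ₂))]
    abel
  have hlaminv : ∀ (θ : Θ) (x : EuclideanSpace ℝ (Fin d)), ‖Ainv θ x‖ ≤ (1/lam) * ‖x‖ :=
    fun θ x => ContinuousLinearMap.le_of_opNorm_le _ (hAinv θ) x
  have t1 : ‖Ainv θ₁ (b θ₂ - b θ₁)‖ ≤ (1/lam) * (6 * Ur * T) := by
    refine (hlaminv θ₁ _).trans ?_
    have : ‖b θ₂ - b θ₁‖ ≤ 6 * Ur * T := by rw [norm_sub_rev]; exact hbd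
    have h1 : 0 ≤ 1/lam := by positivity
    exact mul_le_mul_of_nonneg_left this h1
  have t2 : ‖Ainv θ₂ (A θ₁ (Ainv θ₁ (b θ₂)) - A θ₂ (Ainv θ₁ (b θ₂)))‖
      ≤ (1/lam) * (4 * T * ((1/lam) * (2 * Ur))) := by
    refine (hlaminv θ₂ _).trans ?_
    have h1 : 0 ≤ 1/lam := by positivity
    refine mul_le_mul_of_nonneg_left ?_ h1
    refine (hAd _).trans ?_
    have h2 : ‖Ainv θ₁ (b θ₂)‖ ≤ (1/lam) * (2 * Ur) :=
      (hlaminv θ₁ _).trans (mul_le_mul_of_nonneg_left hbnorm h1)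
    have h3 : (0:ℝ) ≤ 4 * T := by linarith
    exact mul_le_mul_of_nonneg_left h2 h3
  have total : ‖ωstar θ₁ - ωstar θ₂‖ ≤ (8 * lam⁻¹^2 + 6 * lam⁻¹) * Ur * T := by
    rw [expand]
    refine (norm_add_le _ _).trans ?_
    have : (1/lam) * (6 * Ur * T) + (1/lam) * (4 * T * ((1/lam) * (2 * Ur)))
        = (8 * lam⁻¹^2 + 6 * lam⁻¹) * Ur * T := by
      field_simp
      ring
    linarith [t1, t2]
  refine total.trans ?_
  have hc : 0 ≤ (8 * lam⁻¹^2 + 6 * lam⁻¹) * Ur := by positivity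
  calc (8 * lam⁻¹^2 + 6 * lam⁻¹) * Ur * T ≤ (8 * lam⁻¹^2 + 6 * lam⁻¹) * Ur * (K * ‖θ₁ - θ₂‖) :=
        mul_le_mul_of_nonneg_left hTD hc
    _ = (8 * lam⁻¹^2 + 6 * lam⁻¹) * Ur * K * ‖θ₁ - θ₂‖ := by ring
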